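/- For a matrix D over ℤ/2 with columns indexed 1..n, the pivot function of any reduction R = D·V (V invertible upper-triangular, R reduced) satisfies: pivot(R[j]) = i if and only if rank(D_i^j) − rank(D_{i+1}^j) − rank(D_i^{j−1}) + rank(D_{i+1}^{j−1}) = 1, where D_a^b denotes the lower-left submatrix of D consisting of rows ≥ a and columns ≤ b. -/

import Mathlib

/-- The pivot of a column `j` of a matrix over `ℤ/2`: the largest row index of
a nonzero entry (`⊥` if the column is zero). -/
def pivot {m n : ℕ} (R : Matrix (Fin m) (Fin n) (ZMod 2)) (j : Fin n) :
    WithBot (Fin m) :=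
  (Finset.univ.filter (fun i => R i j ≠ 0)).max

/-- A matrix is reduced if no two nonzero columns share the same pivot. -/
def Reduced {m n : ℕ} (R : Matrix (Fin m) (Fin n) (ZMod 2)) : Prop :=
  ∀ k j : Fin n, k ≠ j → (fun i => R i k) ≠ 0 → (fun i => R i j) ≠ 0 →
    pivot R k ≠ pivot R j

/-- The lower-left submatrix of `D` consisting of the rows with (0-based)
index `≥ a` and the columns with index `< b`. -/
def lowerLeft {m n : ℕ} (D : Matrix (Fin m) (Fin n) (ZMod 2)) (a b : ℕ) :
    Matrix {i : Fin m // a ≤ i.1} {j : Fin n // j.1 < b} (ZMod 2) :=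
  fun i j => D i.1 j.1

/-- Rank of the lower-left submatrix. -/
noncomputable def rLL {m n : ℕ} (D : Matrix (Fin m) (Fin n) (ZMod 2))
    (a b : ℕ) : ℕ :=
  (lowerLeft D a b).rank

section Aux

variable {m n : ℕ} {R : Matrix (Fin m) (Fin n) (ZMod 2)}

lemma pivot_mem {j : Fin n} {p : Fin m} (h : pivot R j = ↑p) : R p j ≠ 0 := by
  have := Finset.mem_of_max h
  simpa using this

lemma le_pivot {j : Fin n} {p : Fin m} (h : pivot R j = ↑p) {i : Fin m}
    (hi : R i j ≠ 0) : i ≤ p := by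
  have : (i : WithBot (Fin m)) ≤ pivot R j := Finset.le_max (by simp [hi])
  rw [h] at this
  exact_mod_cast this

lemma zero_of_pivot_lt {j : Fin n} {p : Fin m} (h : pivot R j = ↑p) {i : Fin m}
    (hi : p < i) : R i j = 0 := by
  by_contra hc
  exact absurd (le_pivot h hc) (not_le.mpr hi)

lemma exists_pivot {j : Fin n} {i : Fin m} (hi : R i j ≠ 0) :
    ∃ p : Fin m, pivot R j = ↑p ∧ i ≤ p := by
  rcases hmax : pivot R j with _ | p
  · exfalso
    have h0 : (Finset.univ.filter (fun i => R i j ≠ 0)) = ∅ := Finset.max_eq_bot.mp hmax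
    have : i ∈ (∅ : Finset (Fin m)) := h0 ▸ (by simp [hi])
    simp at this
  · exact ⟨p, rfl, le_pivot hmax hi⟩

lemma pivot_prop_iff {j : Fin n} {a : ℕ} :
    (∃ p : Fin m, pivot R j = ↑p ∧ a ≤ p.1) ↔ ∃ i : Fin m, a ≤ i.1 ∧ R i j ≠ 0 := by
  constructor
  · rintro ⟨p, hp, hap⟩
    exact ⟨p, hap, pivot_mem hp⟩
  · rintro ⟨i, hai, hi⟩
    obtain ⟨p, hp, hip⟩ := exists_pivot hi
    exact ⟨p, hp, le_trans hai hip⟩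

open Matrix Finset in
/-- The rank of a lower-left submatrix of a reduced matrix counts the columns
whose pivot lies in the submatrix. -/
lemma rank_lowerLeft_eq_card (hred : Reduced R) (a b : ℕ) :
    (lowerLeft R a b).rank =
      (Finset.univ.filter
        (fun k : Fin n => k.1 < b ∧ ∃ p : Fin m, pivot R k = ↑p ∧ a ≤ p.1)).card := by
  classical
  set M := lowerLeft R a b with hM
  set P : {j : Fin n // j.1 < b} → Prop := fun j => Mᵀ j ≠ 0 with hP
  set v : {j : {j : Fin n // j.1 < b} // P j} → ({i : Fin m // a ≤ i.1} → ZMod 2) :=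
    fun j => Mᵀ j.1 with hv
  have hPiff : ∀ j : {j : Fin n // j.1 < b},
      P j ↔ ∃ p : Fin m, pivot R j.1 = ↑p ∧ a ≤ p.1 := by
    intro j
    rw [pivot_prop_iff]
    constructor
    · intro h
      have : ∃ i : {i : Fin m // a ≤ i.1}, Mᵀ j i ≠ 0 := by
        by_contra hc
        push_neg at hc
        exact h (funext fun i => hc i)
      obtain ⟨i, hi⟩ := this
      exact ⟨i.1, i.2, hi⟩
    · rintro ⟨i, hai, hi⟩ hc
      have : Mᵀ j ⟨i, hai⟩ = 0 := by rw [hc]; rfl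
      exact hi this
  have hli : LinearIndependent (ZMod 2) v := by
    rw [Fintype.linearIndependent_iff]
    intro g hg
    by_contra hc
    push_neg at hc
    obtain ⟨j0, hj0⟩ := hc
    set T : Finset {j : {j : Fin n // j.1 < b} // P j} := univ.filter (fun j => g j ≠ 0) with hT
    have hTne : T.Nonempty := ⟨j0, by simp [hT, hj0]⟩
    have hpiv : ∀ j : {j : {j : Fin n // j.1 < b} // P j},
        ∃ p : Fin m, pivot R j.1.1 = ↑p ∧ a ≤ p.1 := fun j => (hPiff j.1).mp j.2
    choose pv hpv hapv using hpiv
    obtain ⟨j1, hj1T, hj1max⟩ := T.exists_max_image pv hTne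
    have hrow := congrFun hg ⟨pv j1, hapv j1⟩
    rw [Finset.sum_apply] at hrow
    have hterm : ∀ j ∈ univ, j ≠ j1 → (g j • v j) ⟨pv j1, hapv j1⟩ = 0 := by
      intro j _ hjne
      by_cases hjT : j ∈ T
      · have hne : j.1.1 ≠ j1.1.1 := by
          intro h
          exact hjne (Subtype.ext (Subtype.ext h))
        have hcolj : (fun i => R i j.1.1) ≠ 0 := by
          intro h
          exact pivot_mem (hpv j) (congrFun h (pv j))
        have hcolj1 : (fun i => R i j1.1.1) ≠ 0 := by
          intro h
          exact pivot_mem (hpv j1) (congrFun h (pv j1))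
        have hpne : pivot R j.1.1 ≠ pivot R j1.1.1 := hred _ _ hne hcolj hcolj1
        have hlt : pv j < pv j1 := by
          rcases lt_or_eq_of_le (hj1max j hjT) with h | h
          · exact h
          · exfalso; apply hpne; rw [hpv j, hpv j1, h]
        have : R (pv j1) j.1.1 = 0 := zero_of_pivot_lt (hpv j) hlt
        simp [hv, Matrix.transpose_apply, hM, lowerLeft, this]
      · simp only [hT, mem_filter, mem_univ, true_and, not_not] at hjT
        simp [hjT]
    rw [Finset.sum_eq_single_of_mem j1 (mem_univ _) hterm] at hrow
    have hj1ne : g j1 ≠ 0 := by simpa [hT] using hj1T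
    have hRne : R (pv j1) j1.1.1 ≠ 0 := pivot_mem (hpv j1)
    have hvv : v j1 ⟨pv j1, hapv j1⟩ = R (pv j1) j1.1.1 := rfl
    rw [Pi.smul_apply, hvv, smul_eq_mul] at hrow
    exact hRne (by
      rcases mul_eq_zero.mp hrow with h | h
      · exact absurd h hj1ne
      · exact h)
  have hspan : Submodule.span (ZMod 2) (Set.range Mᵀ) =
      Submodule.span (ZMod 2) (Set.range v) := by
    apply le_antisymm
    · rw [Submodule.span_le]
      rintro x ⟨j, rfl⟩
      by_cases hj : P j
      · exact Submodule.subset_span ⟨⟨j, hj⟩, rfl⟩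
      · rw [not_not.mp (by simpa [hP, not_not] using hj : ¬ P j)]
        exact Submodule.zero_mem _
    · rw [Submodule.span_le]
      rintro x ⟨j, rfl⟩
      exact Submodule.subset_span ⟨j.1, rfl⟩
  rw [Matrix.rank_eq_finrank_span_cols, show M.col = Mᵀ from rfl, hspan, finrank_span_eq_card hli]
  rw [Fintype.card_congr (Equiv.subtypeEquivRight fun j => hPiff j)]
  rw [Fintype.card_congr (Equiv.subtypeSubtypeEquivSubtypeInter
    (fun j : Fin n => j.1 < b) (fun j : Fin n => ∃ p : Fin m, pivot R j = ↑p ∧ a ≤ p.1))]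
  rw [Fintype.card_subtype]

open Matrix Finset in
/-- Multiplying on the right by an upper-triangular matrix factors through
the lower-left submatrix. -/
lemma lowerLeft_mul {D : Matrix (Fin m) (Fin n) (ZMod 2)}
    {W : Matrix (Fin n) (Fin n) (ZMod 2)} (hWt : W.BlockTriangular id) (a b : ℕ) :
    lowerLeft (D * W) a b =
      lowerLeft D a b * (Matrix.of fun j k : {j : Fin n // j.1 < b} => W j.1 k.1) := by
  funext i j
  simp only [lowerLeft, Matrix.mul_apply, Matrix.of_apply]
  rw [← Finset.sum_subtype (Finset.univ.filter (fun k : Fin n => k.1 < b))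
    (fun k => by simp) (fun k : Fin n => D i.1 k * W k j.1)]
  symm
  apply Finset.sum_subset (Finset.filter_subset _ _)
  intro k _ hk
  simp only [mem_filter, mem_univ, true_and, not_lt] at hk
  have : W k j.1 = 0 := hWt (by
    show (j.1 : Fin n) < k
    have : (j.1 : ℕ) < (k : ℕ) := lt_of_lt_of_le j.2 hk
    exact Fin.lt_def.mpr this)
  rw [this, mul_zero]

/-- Rank of the lower-left submatrix is invariant under right multiplication
by an invertible upper-triangular matrix. -/
lemma rLL_mul_eq {D : Matrix (Fin m) (Fin n) (ZMod 2)}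
    {V : Matrix (Fin n) (Fin n) (ZMod 2)}
    (hV : IsUnit V) (hVt : V.BlockTriangular id) (a b : ℕ) :
    rLL (D * V) a b = rLL D a b := by
  have hdet : IsUnit V.det := (Matrix.isUnit_iff_isUnit_det V).mp hV
  have hVinv : D * V * V⁻¹ = D := by
    rw [Matrix.mul_assoc, Matrix.mul_nonsing_inv V hdet, Matrix.mul_one]
  haveI : Invertible V := hV.invertible
  have hVit : (V⁻¹).BlockTriangular id := Matrix.blockTriangular_inv_of_blockTriangular hVt
  apply le_antisymm
  · rw [rLL, rLL, lowerLeft_mul hVt]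
    exact Matrix.rank_mul_le_left _ _
  · conv_lhs => rw [rLL, ← hVinv, lowerLeft_mul hVit]
    exact Matrix.rank_mul_le_left _ _

end Aux

/-- pairing lemma of Cohen-Steiner–Edelsbrunner–Morozov: for
any reduction `R = D·V` (with `V` invertible upper-triangular and `R`
reduced), the pivot of column `j` of `R` is row `i` if and only if
`rank(D_i^j) − rank(D_{i+1}^j) − rank(D_i^{j−1}) + rank(D_{i+1}^{j−1}) = 1`,
where `D_a^b` is the lower-left submatrix of `D` with rows `≥ a` and columns
`≤ b`.  (With 0-based indices `i : Fin m`, `j : Fin n`, the submatrix of rows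
`≥ i` and columns `≤ j` is `lowerLeft D i (j+1)`.) -/
theorem pairing_lemma_ranks {m n : ℕ}
    (D R : Matrix (Fin m) (Fin n) (ZMod 2))
    (V : Matrix (Fin n) (Fin n) (ZMod 2))
    (hV : IsUnit V) (hVt : V.BlockTriangular id)
    (hR : R = D * V) (hred : Reduced R) :
    ∀ i : Fin m, ∀ j : Fin n,
      pivot R j = (i : WithBot (Fin m)) ↔
        (rLL D i.1 (j.1 + 1) : ℤ) - rLL D (i.1 + 1) (j.1 + 1)
          - rLL D i.1 j.1 + rLL D (i.1 + 1) j.1 = 1 := by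
  classical
  intro i j
  -- replace rLL D by rLL R
  have hD : ∀ a b : ℕ, rLL D a b = rLL R a b := fun a b => by
    rw [hR, rLL_mul_eq hV hVt]
  -- counting function
  set cnt : ℕ → ℕ → ℕ := fun a b =>
    (Finset.univ.filter
      (fun k : Fin n => k.1 < b ∧ ∃ p : Fin m, pivot R k = ↑p ∧ a ≤ p.1)).card with hcnt
  have hrLL : ∀ a b : ℕ, rLL D a b = cnt a b := fun a b => by
    rw [hD, rLL, rank_lowerLeft_eq_card hred]
  set G : ℕ → ℕ := fun b =>
    (Finset.univ.filter (fun k : Fin n => k.1 < b ∧ pivot R k = (i : WithBot (Fin m)))).card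
    with hG
  -- splitting lemma: cnt i b = cnt (i+1) b + G b
  have hsplit : ∀ b : ℕ, cnt i.1 b = cnt (i.1 + 1) b + G b := by
    intro b
    simp only [hcnt, hG]
    have hiff : ∀ k : Fin n,
        (k.1 < b ∧ ∃ p : Fin m, pivot R k = ↑p ∧ i.1 ≤ p.1) ↔
        ((k.1 < b ∧ ∃ p : Fin m, pivot R k = ↑p ∧ i.1 + 1 ≤ p.1) ∨
          (k.1 < b ∧ pivot R k = (i : WithBot (Fin m)))) := by
      intro k
      constructor
      · rintro ⟨hkb, p, hp, hip⟩
        rcases eq_or_lt_of_le hip with h | h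
        · right
          refine ⟨hkb, ?_⟩
          have : p = i := Fin.ext h.symm
          rw [hp, this]
        · exact Or.inl ⟨hkb, p, hp, h⟩
      · rintro (⟨hkb, p, hp, hip⟩ | ⟨hkb, hpk⟩)
        · exact ⟨hkb, p, hp, by omega⟩
        · exact ⟨hkb, i, hpk, le_refl _⟩
    have hdisj : Disjoint
        (Finset.univ.filter (fun k : Fin n =>
          k.1 < b ∧ ∃ p : Fin m, pivot R k = ↑p ∧ i.1 + 1 ≤ p.1))
        (Finset.univ.filter (fun k : Fin n =>
          k.1 < b ∧ pivot R k = (i : WithBot (Fin m)))) := by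
      rw [Finset.disjoint_filter]
      rintro k _ ⟨_, p, hp, hip⟩ ⟨_, hpk⟩
      rw [hpk] at hp
      have : p = i := by exact_mod_cast hp.symm
      omega
    rw [Finset.filter_congr (fun k _ => hiff k), Finset.filter_or,
      Finset.card_union_of_disjoint hdisj]
  -- step lemma for G
  have hstep : G (j.1 + 1) =
      G j.1 + (if pivot R j = (i : WithBot (Fin m)) then 1 else 0) := by
    simp only [hG]
    have hiff : ∀ k : Fin n,
        (k.1 < j.1 + 1 ∧ pivot R k = (i : WithBot (Fin m))) ↔
        ((k.1 < j.1 ∧ pivot R k = (i : WithBot (Fin m))) ∨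
          (k = j ∧ pivot R j = (i : WithBot (Fin m)))) := by
      intro k
      constructor
      · rintro ⟨hkb, hpk⟩
        rcases Nat.lt_succ_iff_lt_or_eq.mp hkb with h | h
        · exact Or.inl ⟨h, hpk⟩
        · have : k = j := Fin.ext h
          subst this
          exact Or.inr ⟨rfl, hpk⟩
      · rintro (⟨hkb, hpk⟩ | ⟨rfl, hpk⟩)
        · exact ⟨by omega, hpk⟩
        · exact ⟨by omega, hpk⟩
    have hdisj : Disjoint
        (Finset.univ.filter (fun k : Fin n =>
          k.1 < j.1 ∧ pivot R k = (i : WithBot (Fin m))))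
        (Finset.univ.filter (fun k : Fin n =>
          k = j ∧ pivot R j = (i : WithBot (Fin m)))) := by
      rw [Finset.disjoint_filter]
      rintro k _ ⟨hkj, _⟩ ⟨rfl, _⟩
      omega
    rw [Finset.filter_congr (fun k _ => hiff k), Finset.filter_or,
      Finset.card_union_of_disjoint hdisj]
    congr 1
    by_cases hpj : pivot R j = (i : WithBot (Fin m))
    · rw [if_pos hpj]
      simp only [hpj, and_true]
      rw [Finset.filter_eq']
      simp
    · simp [hpj]
  rw [hrLL, hrLL, hrLL, hrLL, hsplit (j.1 + 1), hsplit j.1, hstep]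
  by_cases hpj : pivot R j = (i : WithBot (Fin m))
  · rw [if_pos hpj]
    apply iff_of_true hpj
    push_cast
    ring
  · rw [if_neg hpj]
    apply iff_of_false hpj
    intro h
    push_cast at h
    omega
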